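/- For k > 0 and y > 0, C_BS(k,y) + C_BS(k, 2k/y) = 1 - 2·e^k·Φ(-k/y - y/2) ≤ 1. In particular, for 0 < c < 1, Y_BS(k,c)·Y_BS(k,1-c) ≥ 2k. -/

import Mathlib

open MeasureTheory Real Filter Asymptotics Set

/-- Standard normal density. -/
noncomputable def phi (z : ℝ) : ℝ := (Real.sqrt (2 * Real.pi))⁻¹ * Real.exp (-z ^ 2 / 2)

/-- Standard normal CDF. -/
noncomputable def Phi (x : ℝ) : ℝ := ∫ z in Set.Iic x, phi z

/-- Black–Scholes normalized call price. -/
noncomputable def CBS (k y : ℝ) : ℝ :=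
  if 0 < y then Phi (-k / y + y / 2) - Real.exp k * Phi (-k / y - y / 2)
  else max (1 - Real.exp k) 0

/-- Implied total standard deviation: inverse of `CBS k` on `[0,∞)`. -/
noncomputable def YBS (k c : ℝ) : ℝ := sInf {y : ℝ | 0 ≤ y ∧ CBS k y = c}

/-- Inverse of the standard normal CDF on (0,1). -/
noncomputable def PhiInv (u : ℝ) : ℝ := sInf {x : ℝ | u ≤ Phi x}

/-- Extended-real quantile with the convention `Φ⁻¹(u) = +∞` for `u ≥ 1`, `-∞` for `u ≤ 0`. -/
noncomputable def PhiInvE (u : ℝ) : EReal :=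
  if 1 ≤ u then ⊤ else if u ≤ 0 then ⊥ else ((PhiInv u : ℝ) : EReal)


open Topology

lemma integrable_phi : Integrable phi := by
  have h : phi = fun z => (Real.sqrt (2 * Real.pi))⁻¹ * Real.exp (-(1/2) * z^2) := by
    funext z; unfold phi; congr 1; ring_nf
  rw [h]
  exact (integrable_exp_neg_mul_sq (by norm_num)).const_mul _

lemma continuous_phi : Continuous phi := by
  unfold phi; fun_prop

lemma phi_pos (z : ℝ) : 0 < phi z := by
  unfold phi
  positivity

lemma integral_phi : ∫ z, phi z = 1 := by
  unfold phi
  rw [MeasureTheory.integral_const_mul]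
  have h : ∀ z : ℝ, Real.exp (-z^2/2) = Real.exp (-(1/2) * z^2) := fun z => by ring_nf
  simp_rw [h, integral_gaussian]
  rw [show (π / (1/2)) = 2 * π by ring]
  rw [inv_mul_cancel₀ (by positivity)]

lemma phi_neg (z : ℝ) : phi (-z) = phi z := by unfold phi; ring_nf

lemma Phi_add_Phi_neg (x : ℝ) : Phi x + Phi (-x) = 1 := by
  have h1 : Phi (-x) = ∫ z in Set.Ioi x, phi z := by
    rw [Phi, show (∫ z in Set.Iic (-x), phi z) = ∫ z in Set.Iic (-x), phi (-z) by
      simp_rw [phi_neg], integral_comp_neg_Iic, neg_neg]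
  rw [Phi, h1, intervalIntegral.integral_Iic_add_Ioi integrable_phi.integrableOn
    integrable_phi.integrableOn, integral_phi]

lemma Phi_nonneg (x : ℝ) : 0 ≤ Phi x :=
  setIntegral_nonneg measurableSet_Iic fun z _ => (phi_pos z).le

lemma Phi_pos (x : ℝ) : 0 < Phi x := by
  have h : Phi x - Phi (x - 1) = ∫ z in (x-1)..x, phi z := by
    rw [Phi, Phi]
    exact intervalIntegral.integral_Iic_sub_Iic integrable_phi.integrableOn
      integrable_phi.integrableOn
  have hpos : 0 < ∫ z in (x-1)..x, phi z :=
    intervalIntegral.intervalIntegral_pos_of_pos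
      integrable_phi.intervalIntegrable (fun z => phi_pos z) (by linarith)
  have := Phi_nonneg (x - 1)
  linarith

lemma Phi_lt_one (x : ℝ) : Phi x < 1 := by
  have := Phi_add_Phi_neg x
  have := Phi_pos (-x)
  linarith

lemma hasDerivAt_Phi (x : ℝ) : HasDerivAt Phi (phi x) x := by
  have key : ∀ u : ℝ, Phi u - Phi 0 = ∫ t in (0:ℝ)..u, phi t := fun u => by
    rw [Phi, Phi]
    exact intervalIntegral.integral_Iic_sub_Iic integrable_phi.integrableOn
      integrable_phi.integrableOn
  have h0 : ∀ u : ℝ, Phi u = Phi 0 + ∫ t in (0:ℝ)..u, phi t := fun u => by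
    rw [← key u]; ring
  have h := ((continuous_phi.integral_hasStrictDerivAt 0 x).hasDerivAt.const_add (Phi 0))
  exact h.congr_of_eventuallyEq (Eventually.of_forall h0)


lemma phi_rel (k y : ℝ) (hy : y ≠ 0) :
    Real.exp k * phi (-k / y - y / 2) = phi (-k / y + y / 2) := by
  unfold phi
  rw [show (-(-k / y + y / 2) ^ 2 / 2) = k + (-(-k / y - y / 2) ^ 2 / 2) by
    field_simp; ring]
  rw [Real.exp_add]; ring

lemma hasDerivAt_CBS (k : ℝ) {y : ℝ} (hy : 0 < y) :
    HasDerivAt (CBS k) (phi (-k / y + y / 2)) y := by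
  have hd1 : HasDerivAt (fun y : ℝ => -k / y + y / 2) (k / y ^ 2 + 1 / 2) y := by
    have h1 : HasDerivAt (fun y : ℝ => -k / y) (k / y ^ 2) y := by
      have := (hasDerivAt_inv hy.ne').const_mul (-k)
      rw [show (fun y : ℝ => -k / y) = fun y => -k * y⁻¹ by funext x; ring]
      exact this.congr_deriv (by ring)
    exact h1.add ((hasDerivAt_id y).div_const 2)
  have hd2 : HasDerivAt (fun y : ℝ => -k / y - y / 2) (k / y ^ 2 - 1 / 2) y := by
    have h1 : HasDerivAt (fun y : ℝ => -k / y) (k / y ^ 2) y := by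
      have := (hasDerivAt_inv hy.ne').const_mul (-k)
      rw [show (fun y : ℝ => -k / y) = fun y => -k * y⁻¹ by funext x; ring]
      exact this.congr_deriv (by ring)
    exact h1.sub ((hasDerivAt_id y).div_const 2)
  have hP1 := (hasDerivAt_Phi (-k / y + y / 2)).comp y hd1
  have hP2 := ((hasDerivAt_Phi (-k / y - y / 2)).comp y hd2).const_mul (Real.exp k)
  have hg := hP1.sub hP2
  have heq : phi (-k / y + y / 2) * (k / y ^ 2 + 1 / 2) -
      Real.exp k * (phi (-k / y - y / 2) * (k / y ^ 2 - 1 / 2)) = phi (-k / y + y / 2) := by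
    rw [show Real.exp k * (phi (-k / y - y / 2) * (k / y ^ 2 - 1 / 2)) =
      (Real.exp k * phi (-k / y - y / 2)) * (k / y ^ 2 - 1 / 2) by ring,
      phi_rel k y hy.ne']
    ring
  rw [heq] at hg
  refine hg.congr_of_eventuallyEq ?_
  filter_upwards [eventually_gt_nhds hy] with u hu
  simp only [CBS, if_pos hu, Function.comp, Pi.sub_apply]

lemma CBS_strictMonoOn (k : ℝ) : StrictMonoOn (CBS k) (Set.Ioi 0) := by
  refine strictMonoOn_of_deriv_pos (convex_Ioi 0) ?_ ?_
  · exact fun y hy => ((hasDerivAt_CBS k hy).continuousAt).continuousWithinAt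
  · intro y hy
    rw [interior_Ioi] at hy
    rw [(hasDerivAt_CBS k hy).deriv]
    exact phi_pos _

open Topology in
lemma tendsto_Phi_atTop : Tendsto Phi atTop (𝓝 1) := by
  have key : ∀ u : ℝ, Phi u = Phi 0 + ∫ t in (0:ℝ)..u, phi t := fun u => by
    have : Phi u - Phi 0 = ∫ t in (0:ℝ)..u, phi t := by
      rw [Phi, Phi]
      exact intervalIntegral.integral_Iic_sub_Iic integrable_phi.integrableOn
        integrable_phi.integrableOn
    linarith
  have h2 : Tendsto (fun u : ℝ => ∫ t in (0:ℝ)..u, phi t) atTop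
      (𝓝 (∫ t in Set.Ioi 0, phi t)) :=
    intervalIntegral_tendsto_integral_Ioi 0 integrable_phi.integrableOn tendsto_id
  have h3 : Phi 0 + ∫ t in Set.Ioi (0:ℝ), phi t = 1 := by
    rw [Phi]
    rw [intervalIntegral.integral_Iic_add_Ioi integrable_phi.integrableOn
      integrable_phi.integrableOn, integral_phi]
  have h4 := (tendsto_const_nhds (x := Phi 0) (f := atTop)).add h2
  rw [h3] at h4
  exact h4.congr fun u => (key u).symm

lemma tendsto_Phi_atBot : Tendsto Phi atBot (𝓝 0) := by
  have h := tendsto_Phi_atTop.comp tendsto_neg_atBot_atTop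
  have h2 : Tendsto (fun x : ℝ => 1 - Phi (-x)) atBot (𝓝 (1 - 1)) :=
    tendsto_const_nhds.sub h
  simp only [sub_self] at h2
  exact h2.congr fun x => by have := Phi_add_Phi_neg x; linarith

lemma tendsto_CBS_atTop (k : ℝ) : Tendsto (CBS k) atTop (𝓝 1) := by
  have t1 : Tendsto (fun y : ℝ => -k / y) atTop (𝓝 0) :=
    tendsto_const_nhds.div_atTop tendsto_id
  have t2 : Tendsto (fun y : ℝ => y / 2) atTop atTop :=
    tendsto_id.atTop_div_const two_pos
  have hd1 : Tendsto (fun y : ℝ => -k / y + y / 2) atTop atTop := t1.add_atTop t2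
  have hd2 : Tendsto (fun y : ℝ => -k / y - y / 2) atTop atBot := by
    have : Tendsto (fun y : ℝ => -(y / 2)) atTop atBot := tendsto_neg_atTop_atBot.comp t2
    exact (t1.add_atBot this).congr fun y => by ring
  have hg : Tendsto (fun y : ℝ => Phi (-k / y + y / 2) - Real.exp k * Phi (-k / y - y / 2))
      atTop (𝓝 (1 - Real.exp k * 0)) :=
    (tendsto_Phi_atTop.comp hd1).sub (tendsto_const_nhds.mul (tendsto_Phi_atBot.comp hd2))
  rw [mul_zero, sub_zero] at hg
  refine hg.congr' ?_
  filter_upwards [eventually_gt_atTop (0:ℝ)] with y hy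
  simp [CBS, if_pos hy]

lemma tendsto_CBS_zero {k : ℝ} (hk : 0 < k) : Tendsto (CBS k) (𝓝[>] 0) (𝓝 0) := by
  have hinv : Tendsto (fun y : ℝ => y⁻¹) (𝓝[>] 0) atTop := tendsto_inv_nhdsGT_zero
  have t1 : Tendsto (fun y : ℝ => -k / y) (𝓝[>] 0) atBot := by
    have h1 : Tendsto (fun y : ℝ => k * y⁻¹) (𝓝[>] 0) atTop := hinv.const_mul_atTop hk
    have := tendsto_neg_atTop_atBot.comp h1
    exact this.congr fun y => by simp [Function.comp]; ring
  have t2 : Tendsto (fun y : ℝ => y / 2) (𝓝[>] 0) (𝓝 0) := by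
    have := ((continuous_id.div_const 2).tendsto (0:ℝ)).mono_left
      (nhdsWithin_le_nhds (s := Set.Ioi 0))
    simpa using this
  have hd1 : Tendsto (fun y : ℝ => -k / y + y / 2) (𝓝[>] 0) atBot :=
    (t2.add_atBot t1).congr fun y => by ring
  have hd2 : Tendsto (fun y : ℝ => -k / y - y / 2) (𝓝[>] 0) atBot :=
    ((t2.neg.congr fun y => rfl).add_atBot t1).congr fun y => by ring
  have hg : Tendsto (fun y : ℝ => Phi (-k / y + y / 2) - Real.exp k * Phi (-k / y - y / 2))
      (𝓝[>] 0) (𝓝 (0 - Real.exp k * 0)) :=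
    (tendsto_Phi_atBot.comp hd1).sub (tendsto_const_nhds.mul (tendsto_Phi_atBot.comp hd2))
  rw [mul_zero, sub_zero] at hg
  refine hg.congr' ?_
  filter_upwards [self_mem_nhdsWithin] with y hy
  simp [CBS, if_pos (show (0:ℝ) < y from hy)]

lemma CBS_sum {k y : ℝ} (hk : 0 < k) (hy : 0 < y) :
    CBS k y + CBS k (2 * k / y) = 1 - 2 * Real.exp k * Phi (-k / y - y / 2) := by
  have hy2 : 0 < 2 * k / y := by positivity
  have e1 : -k / (2 * k / y) + (2 * k / y) / 2 = -(-k / y + y / 2) := by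
    field_simp
    ring
  have e2 : -k / (2 * k / y) - (2 * k / y) / 2 = -k / y - y / 2 := by
    field_simp
    ring
  rw [CBS, CBS, if_pos hy, if_pos hy2, e1, e2]
  have h := Phi_add_Phi_neg (-k / y + y / 2)
  linarith

lemma YBS_spec {k : ℝ} (hk : 0 < k) {c : ℝ} (hc0 : 0 < c) (hc1 : c < 1) :
    0 < YBS k c ∧ CBS k (YBS k c) = c := by
  obtain ⟨b, hb0, hbc⟩ : ∃ b : ℝ, 0 < b ∧ c < CBS k b := by
    have h := (tendsto_CBS_atTop k).eventually (eventually_gt_nhds hc1)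
    obtain ⟨b, hb⟩ := (h.and (eventually_gt_atTop 0)).exists
    exact ⟨b, hb.2, hb.1⟩
  obtain ⟨a, ha, hac⟩ : ∃ a : ℝ, a ∈ Set.Ioo 0 b ∧ CBS k a < c := by
    have h := (tendsto_CBS_zero hk).eventually (eventually_lt_nhds hc0)
    have h2 : Set.Ioo (0:ℝ) b ∈ 𝓝[>] (0:ℝ) := Ioo_mem_nhdsGT_of_mem ⟨le_refl 0, hb0⟩
    obtain ⟨a, ha1, ha2⟩ := (h.and h2).exists
    exact ⟨a, ha2, ha1⟩
  have hcont : ContinuousOn (CBS k) (Set.Icc a b) := fun y hy =>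
    ((hasDerivAt_CBS k (lt_of_lt_of_le ha.1 hy.1)).continuousAt).continuousWithinAt
  obtain ⟨y0, hy0mem, hcy0⟩ :=
    intermediate_value_Icc (le_of_lt ha.2) hcont ⟨hac.le, hbc.le⟩
  have hy0pos : 0 < y0 := lt_of_lt_of_le ha.1 hy0mem.1
  have hSet : {y : ℝ | 0 ≤ y ∧ CBS k y = c} = {y0} := by
    ext y
    simp only [Set.mem_setOf_eq, Set.mem_singleton_iff]
    constructor
    · rintro ⟨hy, hyc⟩
      rcases eq_or_lt_of_le hy with h0 | h0
      · exfalso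
        rw [← h0, CBS, if_neg (lt_irrefl 0)] at hyc
        have : (1:ℝ) - Real.exp k ≤ 0 := by
          linarith [Real.one_lt_exp_iff.2 hk]
        rw [max_eq_right this] at hyc
        linarith
      · exact (CBS_strictMonoOn k).injOn (Set.mem_Ioi.mpr h0) (Set.mem_Ioi.mpr hy0pos)
          (hyc.trans hcy0.symm)
    · rintro rfl
      exact ⟨hy0pos.le, hcy0⟩
  rw [YBS, hSet, csInf_singleton]
  exact ⟨hy0pos, hcy0⟩

theorem stmt_16 (k : ℝ) (hk : 0 < k) :
    (∀ y : ℝ, 0 < y →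
      CBS k y + CBS k (2 * k / y) = 1 - 2 * Real.exp k * Phi (-k / y - y / 2) ∧
      CBS k y + CBS k (2 * k / y) ≤ 1) ∧
    ∀ c : ℝ, 0 < c → c < 1 → 2 * k ≤ YBS k c * YBS k (1 - c) := by
  have part1 : ∀ y : ℝ, 0 < y →
      CBS k y + CBS k (2 * k / y) = 1 - 2 * Real.exp k * Phi (-k / y - y / 2) ∧
      CBS k y + CBS k (2 * k / y) ≤ 1 := by
    intro y hy
    refine ⟨CBS_sum hk hy, ?_⟩
    rw [CBS_sum hk hy]
    have h1 := Phi_nonneg (-k / y - y / 2)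
    nlinarith [Real.exp_pos k]
  refine ⟨part1, ?_⟩
  intro c hc0 hc1
  obtain ⟨h1p, h1e⟩ := YBS_spec hk hc0 hc1
  obtain ⟨h2p, h2e⟩ := YBS_spec hk (by linarith : (0:ℝ) < 1 - c) (by linarith : 1 - c < 1)
  set y1 := YBS k c with hy1
  set y2 := YBS k (1 - c) with hy2
  have hsum := (part1 y1 h1p).2
  have hle : CBS k (2 * k / y1) ≤ CBS k y2 := by
    rw [h2e, h1e] at *
    linarith
  have hdiv : 2 * k / y1 ≤ y2 := by
    by_contra hlt
    push_neg at hlt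
    have := (CBS_strictMonoOn k) (Set.mem_Ioi.mpr h2p)
      (Set.mem_Ioi.mpr (by positivity : 0 < 2 * k / y1)) hlt
    linarith
  have := (div_le_iff₀ h1p).mp hdiv
  nlinarith
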